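/- Let I ⊂ ℝ be a bounded closed nondegenerate interval and f : I → ℝ∪{±∞} non-decreasing with f ∈ L^r(I) for some 1 ≤ r < ∞. Then for every real t, ‖ℓ_f⁻¹ − t‖_r = ‖f − t‖_r, where ℓ_f⁻¹ is the upper inverse of ℓ_f restricted to I. -/

import Mathlib

open Set MeasureTheory

/-- The auxiliary function `ℓ_f(t) = ½(min I + max I + λ({f < t}) − λ({f > t}))`
for a real-valued `f` on `I = [a,b]`. -/
noncomputable def ellR (a b : ℝ) (f : ℝ → ℝ) (t : ℝ) : ℝ :=
  (a + b + (volume {x | x ∈ Set.Icc a b ∧ f x < t}).toReal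
    - (volume {x | x ∈ Set.Icc a b ∧ t < f x}).toReal) / 2

/-- The upper inverse of `ℓ_f`. -/
noncomputable def ellInv (a b : ℝ) (f : ℝ → ℝ) (x : ℝ) : ℝ :=
  sSup {u : ℝ | ellR a b f u ≤ x}

lemma measA_le (a b : ℝ) (g : ℝ → ℝ) (P : ℝ → Prop) :
    (volume {x | x ∈ Set.Icc a b ∧ P x}).toReal ≤ b - a ∨ b < a := by
  rcases le_or_gt a b with h | h
  · left
    have hsub : {x | x ∈ Set.Icc a b ∧ P x} ⊆ Set.Icc a b := fun z hz => hz.1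
    have h1 : volume {x | x ∈ Set.Icc a b ∧ P x} ≤ ENNReal.ofReal (b - a) := by
      calc volume {x | x ∈ Set.Icc a b ∧ P x} ≤ volume (Set.Icc a b) := measure_mono hsub
        _ = ENNReal.ofReal (b - a) := Real.volume_Icc
    calc (volume {x | x ∈ Set.Icc a b ∧ P x}).toReal
        ≤ (ENNReal.ofReal (b - a)).toReal := ENNReal.toReal_mono ENNReal.ofReal_ne_top h1
      _ = b - a := ENNReal.toReal_ofReal (by linarith)
  · right; exact h

lemma meas_ne_top (a b : ℝ) (P : ℝ → Prop) :
    volume {x | x ∈ Set.Icc a b ∧ P x} ≠ ⊤ := by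
  have hsub : {x | x ∈ Set.Icc a b ∧ P x} ⊆ Set.Icc a b := fun z hz => hz.1
  have h1 : volume {x | x ∈ Set.Icc a b ∧ P x} ≤ ENNReal.ofReal (b - a) := by
    calc volume {x | x ∈ Set.Icc a b ∧ P x} ≤ volume (Set.Icc a b) := measure_mono hsub
      _ = ENNReal.ofReal (b - a) := Real.volume_Icc
  exact ne_top_of_le_ne_top ENNReal.ofReal_ne_top h1

/-- If `g y < u` at some point `y ∈ [a,b]`, then `ℓ(u) ≥ y`. -/
lemma ell_ge (a b : ℝ) (g : ℝ → ℝ) (hg : Monotone g) {u y : ℝ}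
    (hy : y ∈ Set.Icc a b) (hgy : g y < u) : y ≤ ellR a b g u := by
  have h1 : Set.Icc a y ⊆ {x | x ∈ Set.Icc a b ∧ g x < u} := fun z hz =>
    ⟨⟨hz.1, hz.2.trans hy.2⟩, lt_of_le_of_lt (hg hz.2) hgy⟩
  have h2 : {x | x ∈ Set.Icc a b ∧ u < g x} ⊆ Set.Icc y b := by
    intro z hz
    refine ⟨?_, hz.1.2⟩
    by_contra h
    push_neg at h
    exact absurd (lt_trans (lt_of_le_of_lt (hg h.le) hgy) hz.2) (lt_irrefl _)
  have hA : y - a ≤ (volume {x | x ∈ Set.Icc a b ∧ g x < u}).toReal := by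
    have : volume (Set.Icc a y) ≤ volume {x | x ∈ Set.Icc a b ∧ g x < u} := measure_mono h1
    rw [Real.volume_Icc] at this
    calc y - a = (ENNReal.ofReal (y - a)).toReal :=
          (ENNReal.toReal_ofReal (by linarith [hy.1])).symm
      _ ≤ _ := ENNReal.toReal_mono (meas_ne_top a b _) this
  have hB : (volume {x | x ∈ Set.Icc a b ∧ u < g x}).toReal ≤ b - y := by
    have : volume {x | x ∈ Set.Icc a b ∧ u < g x} ≤ volume (Set.Icc y b) := measure_mono h2
    rw [Real.volume_Icc] at this
    calc (volume {x | x ∈ Set.Icc a b ∧ u < g x}).toReal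
        ≤ (ENNReal.ofReal (b - y)).toReal := ENNReal.toReal_mono ENNReal.ofReal_ne_top this
      _ = b - y := ENNReal.toReal_ofReal (by linarith [hy.2])
  unfold ellR
  linarith

/-- If `u < g y` at some point `y ∈ [a,b]`, then `ℓ(u) ≤ y`. -/
lemma ell_le (a b : ℝ) (g : ℝ → ℝ) (hg : Monotone g) {u y : ℝ}
    (hy : y ∈ Set.Icc a b) (hgy : u < g y) : ellR a b g u ≤ y := by
  have h1 : Set.Icc y b ⊆ {x | x ∈ Set.Icc a b ∧ u < g x} := fun z hz =>
    ⟨⟨hy.1.trans hz.1, hz.2⟩, lt_of_lt_of_le hgy (hg hz.1)⟩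
  have h2 : {x | x ∈ Set.Icc a b ∧ g x < u} ⊆ Set.Icc a y := by
    intro z hz
    refine ⟨hz.1.1, ?_⟩
    by_contra h
    push_neg at h
    exact absurd (lt_trans hz.2 (lt_of_lt_of_le hgy (hg h.le))) (lt_irrefl _)
  have hB : b - y ≤ (volume {x | x ∈ Set.Icc a b ∧ u < g x}).toReal := by
    have : volume (Set.Icc y b) ≤ volume {x | x ∈ Set.Icc a b ∧ u < g x} := measure_mono h1
    rw [Real.volume_Icc] at this
    calc b - y = (ENNReal.ofReal (b - y)).toReal :=
          (ENNReal.toReal_ofReal (by linarith [hy.2])).symm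
      _ ≤ _ := ENNReal.toReal_mono (meas_ne_top a b _) this
  have hA : (volume {x | x ∈ Set.Icc a b ∧ g x < u}).toReal ≤ y - a := by
    have : volume {x | x ∈ Set.Icc a b ∧ g x < u} ≤ volume (Set.Icc a y) := measure_mono h2
    rw [Real.volume_Icc] at this
    calc (volume {x | x ∈ Set.Icc a b ∧ g x < u}).toReal
        ≤ (ENNReal.ofReal (y - a)).toReal := ENNReal.toReal_mono ENNReal.ofReal_ne_top this
      _ = y - a := ENNReal.toReal_ofReal (by linarith [hy.1])
  unfold ellR
  linarith

/-- At continuity points in the interior, the upper inverse recovers `g`. -/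
lemma ellInv_eq (a b : ℝ) (g : ℝ → ℝ) (hg : Monotone g) {x : ℝ}
    (hx : x ∈ Set.Ioo a b) (hc : ContinuousAt g x) : ellInv a b g x = g x := by
  unfold ellInv
  set T := {u : ℝ | ellR a b g u ≤ x} with hT
  -- every element of T is ≤ g x
  have hub : ∀ u ∈ T, u ≤ g x := by
    intro u hu
    by_contra h
    push_neg at h
    -- g x < u ; find y ∈ (x, b) with g y < u
    have hnhds : {y | g y < u} ∩ Set.Ioo a b ∈ nhds x := by
      refine Filter.inter_mem ?_ (isOpen_Ioo.mem_nhds hx)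
      exact hc (Iio_mem_nhds h)
    obtain ⟨l, r, hxlr, hsub⟩ := mem_nhds_iff_exists_Ioo_subset.mp hnhds
    set y := min ((x + r) / 2) ((x + b) / 2) with hy
    have hylt : y ∈ Set.Ioo l r := by
      constructor
      · apply lt_of_lt_of_le hxlr.1
        apply le_min <;> [linarith [hxlr.2]; linarith [hx.2]]
      · apply lt_of_le_of_lt (min_le_left _ _); linarith [hxlr.2]
    have hymem := hsub hylt
    have hyx : x < y := lt_min (by linarith [hxlr.2]) (by linarith [hx.2])
    have hy1 : y ∈ Set.Icc a b := ⟨le_of_lt (hymem.2.1), le_of_lt hymem.2.2⟩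
    have h1 := ell_ge a b g hg hy1 hymem.1
    have h2 : ellR a b g u ≤ x := hu
    linarith
  -- every u < g x is in T
  have hmem : ∀ u, u < g x → u ∈ T := by
    intro u hu
    show ellR a b g u ≤ x
    have hnhds : {y | u < g y} ∩ Set.Ioo a b ∈ nhds x := by
      refine Filter.inter_mem ?_ (isOpen_Ioo.mem_nhds hx)
      exact hc (Ioi_mem_nhds hu)
    obtain ⟨l, r, hxlr, hsub⟩ := mem_nhds_iff_exists_Ioo_subset.mp hnhds
    set y := max ((l + x) / 2) ((a + x) / 2) with hy
    have hl : l < (l + x) / 2 := by linarith [hxlr.1]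
    have hylt : y ∈ Set.Ioo l r := by
      constructor
      · exact hl.trans_le (le_max_left _ _)
      · refine lt_of_le_of_lt (max_le ?_ ?_) hxlr.2 <;> linarith [hxlr.1, hxlr.2, hx.1]
    have hymem := hsub hylt
    have hyx : y < x := max_lt (by linarith [hxlr.1]) (by linarith [hx.1])
    have hy1 : y ∈ Set.Icc a b := ⟨le_of_lt hymem.2.1, le_of_lt hymem.2.2⟩
    have h1 := ell_le a b g hg hy1 hymem.1
    linarith
  have hbdd : BddAbove T := ⟨g x, hub⟩
  have hne : T.Nonempty := ⟨g x - 1, hmem _ (by linarith)⟩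
  refine le_antisymm (csSup_le hne hub) ?_
  by_contra h
  push_neg at h
  have h1 : (sSup T + g x) / 2 ∈ T := hmem _ (by linarith)
  have h2 := le_csSup hbdd h1
  linarith

theorem stmt5 (a b : ℝ) (hab : a < b) (f : ℝ → ℝ)
    (hf : MonotoneOn f (Set.Icc a b)) (r : ℝ) (hr : 1 ≤ r)
    (hLr : MemLp f (ENNReal.ofReal r) (volume.restrict (Set.Icc a b))) :
    ∀ t : ℝ,
      eLpNorm (fun x => ellInv a b f x - t) (ENNReal.ofReal r) (volume.restrict (Set.Icc a b))
        = eLpNorm (fun x => f x - t) (ENNReal.ofReal r) (volume.restrict (Set.Icc a b)) := by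
  intro t
  -- extend f to a monotone function g on ℝ by clamping
  set g : ℝ → ℝ := fun x => f (max a (min x b)) with hgdef
  have hclamp : ∀ x, max a (min x b) ∈ Set.Icc a b := fun x =>
    ⟨le_max_left _ _, max_le hab.le (min_le_right _ _)⟩
  have hg : Monotone g := by
    intro x y hxy
    exact hf (hclamp x) (hclamp y) (max_le_max le_rfl (min_le_min hxy le_rfl))
  have hfg : ∀ x ∈ Set.Icc a b, f x = g x := by
    intro x hx
    simp only [hgdef]
    rw [min_eq_left hx.2, max_eq_right hx.1]
  have hell : ∀ u, ellR a b f u = ellR a b g u := by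
    intro u
    unfold ellR
    have e1 : {x | x ∈ Set.Icc a b ∧ f x < u} = {x | x ∈ Set.Icc a b ∧ g x < u} := by
      ext z
      simp only [Set.mem_setOf_eq]
      constructor
      · rintro ⟨h1, h2⟩; refine ⟨h1, ?_⟩; rw [← hfg z h1]; exact h2
      · rintro ⟨h1, h2⟩; refine ⟨h1, ?_⟩; rw [hfg z h1]; exact h2
    have e2 : {x | x ∈ Set.Icc a b ∧ u < f x} = {x | x ∈ Set.Icc a b ∧ u < g x} := by
      ext z
      simp only [Set.mem_setOf_eq]
      constructor
      · rintro ⟨h1, h2⟩; refine ⟨h1, ?_⟩; rw [← hfg z h1]; exact h2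
      · rintro ⟨h1, h2⟩; refine ⟨h1, ?_⟩; rw [hfg z h1]; exact h2
    rw [e1, e2]
  have hinv : ∀ x, ellInv a b f x = ellInv a b g x := by
    intro x
    unfold ellInv
    congr 1
    ext u
    simp [hell u]
  -- the null exceptional set
  have hN : volume ({x | ¬ContinuousAt g x} ∪ ({a, b} : Set ℝ)) = 0 :=
    Set.Countable.measure_zero
      (hg.countable_not_continuousAt.union ((Set.toFinite ({a, b} : Set ℝ)).countable)) _
  have hae : (fun x => ellInv a b f x - t)
      =ᵐ[volume.restrict (Set.Icc a b)] (fun x => f x - t) := by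
    filter_upwards [ae_restrict_mem measurableSet_Icc,
      ae_restrict_of_ae (measure_eq_zero_iff_ae_notMem.mp hN)] with x hx hx2
    simp only [Set.mem_union, Set.mem_insert_iff, Set.mem_singleton_iff, not_or] at hx2
    obtain ⟨hcx, hxa, hxb⟩ := hx2
    have hxio : x ∈ Set.Ioo a b :=
      ⟨lt_of_le_of_ne hx.1 (Ne.symm hxa), lt_of_le_of_ne hx.2 hxb⟩
    have := ellInv_eq a b g hg hxio (not_not.mp hcx)
    rw [hinv x, this, ← hfg x hx]
  exact eLpNorm_congr_ae hae
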